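/- For every integer n ≥ 3 and every integer l ≥ 1 with 3l < n, the following strict interlacing relations hold: (1) ξ·R_{l−1} and P_l strictly interlace, and the largest among their roots (namely 0) is a root of ξ·R_{l−1}; (2) P_l and P_{l−1} strictly interlace, and the largest root is a root of P_l; (3) Q_l and P_l strictly interlace, and the largest root is a root of P_l; (4) Q_l and Q_{l−1} strictly interlace, and the largest root is a root of Q_l; (5) R_l and Q_l strictly interlace, and the largest root is a root of Q_l; (6) R_l and R_{l−1} strictly interlace, and the largest root is a root of R_l. -/

import Mathlib

/-- Coefficient in the recurrence for `P_l`. -/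
noncomputable def cP (n l : ℕ) : ℝ :=
  ((n : ℝ) - 3 * l + 2) * ((n : ℝ) - 3 * l + 3) * (3 * (l : ℝ) - 2) * (3 * (l : ℝ) - 1)

/-- Coefficient in the recurrence for `Q_l`. -/
noncomputable def cQ (n l : ℕ) : ℝ :=
  ((n : ℝ) - 3 * l + 1) * ((n : ℝ) - 3 * l + 2) * (3 * (l : ℝ) - 1) * (3 * (l : ℝ))

/-- Coefficient in the recurrence for `R_l`. -/
noncomputable def cR (n l : ℕ) : ℝ :=
  ((n : ℝ) - 3 * l) * ((n : ℝ) - 3 * l + 1) * (3 * (l : ℝ)) * (3 * (l : ℝ) + 1)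

/-- The triple `(P_l, Q_l, R_l)` of real polynomials in `ξ` defined by
`P₀ = Q₀ = R₀ = 1` and
`P_l = ξ·R_{l-1} + (n-3l+2)(n-3l+3)(3l-2)(3l-1)·P_{l-1}`,
`Q_l = P_l + (n-3l+1)(n-3l+2)(3l-1)(3l)·Q_{l-1}`,
`R_l = Q_l + (n-3l)(n-3l+1)(3l)(3l+1)·R_{l-1}`. -/
noncomputable def PQR (n : ℕ) : ℕ → Polynomial ℝ × Polynomial ℝ × Polynomial ℝ
  | 0 => (1, 1, 1)
  | l + 1 =>
      let prev := PQR n l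
      let P := Polynomial.X * prev.2.2 + Polynomial.C (cP n (l + 1)) * prev.1
      let Q := P + Polynomial.C (cQ n (l + 1)) * prev.2.1
      let R := Q + Polynomial.C (cR n (l + 1)) * prev.2.2
      (P, Q, R)

/-- Two real polynomials (with only real simple roots) strictly interlace: their root sets
are disjoint and, in the merged strictly increasing list of all their roots, roots of the
two polynomials alternate; equivalently, strictly between any two distinct roots of either
polynomial there is a root of the other one. -/
def StrictInterlace (p q : Polynomial ℝ) : Prop :=
  (∀ x : ℝ, p.IsRoot x → ¬ q.IsRoot x) ∧
  (∀ x y : ℝ, p.IsRoot x → p.IsRoot y → x < y → ∃ z : ℝ, q.IsRoot z ∧ x < z ∧ z < y) ∧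
  (∀ x y : ℝ, q.IsRoot x → q.IsRoot y → x < y → ∃ z : ℝ, p.IsRoot z ∧ x < z ∧ z < y)

/-- The largest among the merged roots of `p` and `q` is a root of `r`. -/
def LargestMergedRootOf (p q r : Polynomial ℝ) : Prop :=
  ∃ x : ℝ, r.IsRoot x ∧ ∀ y : ℝ, (p.IsRoot y ∨ q.IsRoot y) → y ≤ x


section InterlacingAux

open Polynomial Finset Filter

noncomputable def prodRoots {s : ℕ} (u : Fin s → ℝ) : Polynomial ℝ :=
  ∏ i, (X - C (u i))

lemma prodRoots_monic {s : ℕ} (u : Fin s → ℝ) : (prodRoots u).Monic :=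
  monic_prod_of_monic _ _ fun i _ => monic_X_sub_C (u i)

lemma prodRoots_natDegree {s : ℕ} (u : Fin s → ℝ) : (prodRoots u).natDegree = s := by
  rw [prodRoots, natDegree_prod]
  · simp
  · intro i _; exact X_sub_C_ne_zero (u i)

lemma prodRoots_eval {s : ℕ} (u : Fin s → ℝ) (t : ℝ) :
    (prodRoots u).eval t = ∏ i, (t - u i) := by
  simp [prodRoots, eval_prod]

lemma prodRoots_isRoot_iff {s : ℕ} (u : Fin s → ℝ) (t : ℝ) :
    (prodRoots u).IsRoot t ↔ ∃ i, t = u i := by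
  simp [IsRoot, prodRoots_eval, Finset.prod_eq_zero_iff, sub_eq_zero]

lemma sig {s : ℕ} (u : Fin s → ℝ) (t : ℝ) (k : ℕ)
    (h : ∀ i : Fin s, if (i : ℕ) < k then u i < t else t < u i) :
    0 < (-1 : ℝ) ^ (s - k) * ∏ i, (t - u i) := by
  induction s with
  | zero => simp
  | succ m ih =>
    rcases le_or_gt (m + 1) k with hk | hk
    · have h0 : (m + 1) - k = 0 := by omega
      rw [h0, pow_zero, one_mul]
      apply Finset.prod_pos
      intro i _
      have hi := h i
      rw [if_pos (by omega : (i : ℕ) < k)] at hi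
      linarith
    · rw [Fin.prod_univ_castSucc]
      have hlast := h (Fin.last m)
      rw [if_neg (by simp; omega)] at hlast
      have h' : ∀ i : Fin m, if (i : ℕ) < k then u i.castSucc < t else t < u i.castSucc := by
        intro i
        have := h i.castSucc
        simpa using this
      have IH := ih (fun i => u i.castSucc) h'
      have he : (m + 1) - k = (m - k) + 1 := by omega
      rw [he, pow_succ]
      have h2 : (0 : ℝ) < u (Fin.last m) - t := by linarith
      have h3 := mul_pos IH h2
      nlinarith [h3]

lemma root_between {F : Polynomial ℝ} {a b : ℝ} (hab : a < b) {e : ℝ}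
    (h1 : 0 < e * F.eval a) (h2 : 0 < -e * F.eval b) :
    ∃ z : ℝ, a < z ∧ z < b ∧ F.IsRoot z := by
  rcases lt_trichotomy e 0 with he | he | he
  · have ha : F.eval a < 0 := by nlinarith
    have hb : 0 < F.eval b := by nlinarith
    obtain ⟨z, hz, hz0⟩ := intermediate_value_Ioo hab.le F.continuousOn
      (Set.mem_Ioo.mpr ⟨ha, hb⟩)
    exact ⟨z, hz.1, hz.2, hz0⟩
  · rw [he] at h1; simp at h1
  · have ha : 0 < F.eval a := by nlinarith
    have hb : F.eval b < 0 := by nlinarith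
    obtain ⟨z, hz, hz0⟩ := intermediate_value_Ioo' hab.le F.continuousOn
      (Set.mem_Ioo.mpr ⟨hb, ha⟩)
    exact ⟨z, hz.1, hz.2, hz0⟩

lemma exists_left (F : Polynomial ℝ) (d : ℕ) (hd : F.natDegree = d) (hF : F.Monic)
    (hd0 : 0 < d) (B : ℝ) : ∃ t : ℝ, t < B ∧ 0 < (-1 : ℝ) ^ d * F.eval t := by
  set G := Polynomial.C ((-1 : ℝ) ^ d) * F.comp (-X) with hG
  have hXnd : ((-X : Polynomial ℝ)).natDegree = 1 := by simp
  have hcomp_nd : (F.comp (-X)).natDegree = d := by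
    rw [natDegree_comp, hXnd, hd, mul_one]
  have hlc : (F.comp (-X)).leadingCoeff = (-1 : ℝ) ^ d := by
    rw [leadingCoeff_comp (by rw [hXnd]; norm_num)]
    have : ((-X : Polynomial ℝ)).leadingCoeff = -1 := by
      simp [leadingCoeff]
    rw [this, hF.leadingCoeff, one_mul, hd]
  have hGlc : G.leadingCoeff = 1 := by
    rw [hG, leadingCoeff_mul, leadingCoeff_C, hlc, ← mul_pow]
    norm_num
  have hGne : G ≠ 0 := by
    intro h0
    rw [h0, leadingCoeff_zero] at hGlc
    norm_num at hGlc
  have hGnd : G.natDegree = d := by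
    rw [hG, natDegree_C_mul (by positivity : ((-1:ℝ)^d) ≠ 0), hcomp_nd]
  have hdeg : 0 < G.degree := by
    rw [← natDegree_pos_iff_degree_pos, hGnd]; exact hd0
  have htt := Polynomial.tendsto_atTop_of_leadingCoeff_nonneg G hdeg (by rw [hGlc]; norm_num)
  have h1 : ∀ᶠ x : ℝ in atTop, 0 < G.eval x := htt.eventually_gt_atTop 0
  have h2 : ∀ᶠ x : ℝ in atTop, -B < x := eventually_gt_atTop (-B)
  obtain ⟨x, hx1, hx2⟩ := (h1.and h2).exists
  refine ⟨-x, by linarith, ?_⟩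
  have : G.eval x = (-1 : ℝ) ^ d * F.eval (-x) := by
    rw [hG, eval_mul, eval_C, eval_comp]
    simp
  rw [this] at hx1
  exact hx1


lemma key {m : ℕ} (g : Fin (m + 1) → ℝ) (h : Fin m → ℝ) {c : ℝ} (hc : 0 < c)
    (hgh : ∀ i : Fin m, g i.castSucc < h i) (hhg : ∀ i : Fin m, h i < g i.succ) :
    ∃ z : Fin (m + 1) → ℝ,
      prodRoots g + C c * prodRoots h = prodRoots z ∧
      StrictMono z ∧ (∀ j, z j < g j) ∧ (∀ i : Fin m, h i < z i.succ) := by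
  have gmono : StrictMono g :=
    Fin.strictMono_iff_lt_succ.mpr fun i => (hgh i).trans (hhg i)
  have hglth : ∀ (j : Fin (m + 1)) (i : Fin m), (j : ℕ) ≤ (i : ℕ) → g j < h i := by
    intro j i hji
    exact lt_of_le_of_lt (gmono.monotone (show j ≤ i.castSucc by
      rw [Fin.le_def]; simpa using hji)) (hgh i)
  have hhltg : ∀ (i : Fin m) (j : Fin (m + 1)), (i : ℕ) < (j : ℕ) → h i < g j := by
    intro i j hij
    exact lt_of_lt_of_le (hhg i) (gmono.monotone (show i.succ ≤ j by
      rw [Fin.le_def]; simpa using hij))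
  set F := prodRoots g + C c * prodRoots h with hF
  have evalF : ∀ t, F.eval t = (∏ i, (t - g i)) + c * ∏ i, (t - h i) := by
    intro t; simp [hF, prodRoots_eval]
  -- sign of F at the g j
  have hFg : ∀ j : Fin (m + 1), 0 < (-1 : ℝ) ^ (m - (j : ℕ)) * F.eval (g j) := by
    intro j
    have hzero : (∏ i, (g j - g i)) = 0 :=
      Finset.prod_eq_zero (mem_univ j) (by ring)
    have hsig := sig h (g j) (j : ℕ) (by
      intro i
      split
      · exact hhltg i j (by omega)
      · exact hglth j i (by omega))
    rw [evalF, hzero, zero_add]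
    calc (0:ℝ) < c * ((-1 : ℝ) ^ (m - (j : ℕ)) * ∏ i, (g j - h i)) := mul_pos hc hsig
    _ = (-1 : ℝ) ^ (m - (j : ℕ)) * (c * ∏ i, (g j - h i)) := by ring
  -- sign of F at the h i
  have hFh : ∀ i : Fin m, 0 < (-1 : ℝ) ^ (m - (i : ℕ)) * F.eval (h i) := by
    intro i
    have hzero : (∏ j, (h i - h j)) = 0 :=
      Finset.prod_eq_zero (mem_univ i) (by ring)
    have hsig := sig g (h i) ((i : ℕ) + 1) (by
      intro j
      split
      · exact hglth j i (by omega)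
      · exact hhltg i j (by omega))
    have he : (m + 1) - ((i : ℕ) + 1) = m - (i : ℕ) := by omega
    rw [he] at hsig
    rw [evalF, hzero, mul_zero, add_zero]
    exact hsig
  -- F is monic of degree m+1
  have hGdeg : (prodRoots g).degree = ((m + 1 : ℕ) : WithBot ℕ) := by
    rw [degree_eq_natDegree (prodRoots_monic g).ne_zero, prodRoots_natDegree]
  have hHdegle : (C c * prodRoots h).degree ≤ ((m : ℕ) : WithBot ℕ) := by
    calc (C c * prodRoots h).degree ≤ (C c).degree + (prodRoots h).degree :=
          degree_mul_le _ _
    _ ≤ 0 + (prodRoots h).degree := by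
          exact add_le_add degree_C_le le_rfl
    _ = (prodRoots h).degree := by rw [zero_add]
    _ ≤ ((m : ℕ) : WithBot ℕ) := by
          rw [degree_eq_natDegree (prodRoots_monic h).ne_zero, prodRoots_natDegree]
  have hlt : (C c * prodRoots h).degree < (prodRoots g).degree := by
    rw [hGdeg]
    exact lt_of_le_of_lt hHdegle (by exact_mod_cast Nat.lt_succ_self m)
  have hFmonic : F.Monic := (prodRoots_monic g).add_of_left hlt
  have hFdeg : F.natDegree = m + 1 := by
    have : F.degree = (prodRoots g).degree := degree_add_eq_left_of_degree_lt hlt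
    rw [hGdeg] at this
    exact natDegree_eq_of_degree_eq_some this
  -- roots in the gaps (h i, g i.succ)
  have hroots : ∀ i : Fin m, ∃ z : ℝ, h i < z ∧ z < g i.succ ∧ F.IsRoot z := by
    intro i
    have hesucc : m - (i : ℕ) = (m - ((i : ℕ) + 1)) + 1 := by omega
    have h1 := hFh i
    rw [hesucc, pow_succ] at h1
    have h2 := hFg i.succ
    have : ((i.succ : Fin (m+1)) : ℕ) = (i : ℕ) + 1 := by simp
    rw [this] at h2
    refine root_between (hhg i) (e := (-1 : ℝ) ^ (m - ((i : ℕ) + 1)) * (-1)) ?_ ?_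
    · exact h1
    · have : -((-1 : ℝ) ^ (m - ((i : ℕ) + 1)) * (-1)) = (-1 : ℝ) ^ (m - ((i : ℕ) + 1)) := by
        ring
      rw [this]
      exact h2
  choose zs hz1 hz2 hz3 using hroots
  -- the leftmost root
  obtain ⟨t, htB, ht⟩ := exists_left F (m + 1) hFdeg hFmonic (by omega) (g 0)
  have hz0ex : ∃ z : ℝ, t < z ∧ z < g 0 ∧ F.IsRoot z := by
    have h2 := hFg 0
    have h0 : ((0 : Fin (m+1)) : ℕ) = 0 := rfl
    rw [h0, Nat.sub_zero] at h2
    refine root_between htB (e := (-1 : ℝ) ^ (m + 1)) ht ?_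
    have : -(-1 : ℝ) ^ (m + 1) = (-1 : ℝ) ^ m := by
      rw [pow_succ]; ring
    rw [this]
    exact h2
  obtain ⟨z0, htz0, hz0g, hz0root⟩ := hz0ex
  set z : Fin (m + 1) → ℝ := Fin.cons z0 zs with hz
  have hzsucc : ∀ i : Fin m, z i.succ = zs i := by
    intro i; rw [hz]; simp
  have hzzero : z 0 = z0 := by rw [hz]; simp
  have hzg : ∀ j, z j < g j := by
    intro j
    refine Fin.cases ?_ ?_ j
    · rw [hzzero]; exact hz0g
    · intro i; rw [hzsucc]; exact hz2 i
  have hhz : ∀ i : Fin m, h i < z i.succ := fun i => by rw [hzsucc]; exact hz1 i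
  have hzmono : StrictMono z := by
    refine Fin.strictMono_iff_lt_succ.mpr fun i => ?_
    calc z i.castSucc < g i.castSucc := hzg i.castSucc
    _ < h i := hgh i
    _ < z i.succ := hhz i
  have hzroot : ∀ j, F.IsRoot (z j) := by
    intro j
    refine Fin.cases ?_ ?_ j
    · rw [hzzero]; exact hz0root
    · intro i; rw [hzsucc]; exact hz3 i
  -- F equals the product over the z j
  refine ⟨z, ?_, hzmono, hzg, hhz⟩
  have hZdeg : (prodRoots z).degree = ((m + 1 : ℕ) : WithBot ℕ) := by
    rw [degree_eq_natDegree (prodRoots_monic z).ne_zero, prodRoots_natDegree]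
  have hFdeg' : F.degree = ((m + 1 : ℕ) : WithBot ℕ) := by
    rw [degree_eq_natDegree hFmonic.ne_zero, hFdeg]
  by_contra hne
  have hDne : F - prodRoots z ≠ 0 := sub_ne_zero.mpr hne
  have hdd : F.degree = (prodRoots z).degree := by rw [hFdeg', hZdeg]
  have hll : F.leadingCoeff = (prodRoots z).leadingCoeff := by
    rw [hFmonic.leadingCoeff, (prodRoots_monic z).leadingCoeff]
  have hDdeg : (F - prodRoots z).degree < ((m + 1 : ℕ) : WithBot ℕ) := by
    have := degree_sub_lt (p := F) (q := prodRoots z) hdd hFmonic.ne_zero hll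
    rwa [hFdeg'] at this
  have hDnd : (F - prodRoots z).natDegree < m + 1 := by
    have := natDegree_lt_iff_degree_lt (n := m+1) hDne
    exact this.mpr hDdeg
  have hsub : (Finset.univ.image z) ⊆ (F - prodRoots z).roots.toFinset := by
    intro a ha
    obtain ⟨j, _, rfl⟩ := Finset.mem_image.mp ha
    rw [Multiset.mem_toFinset, mem_roots hDne]
    show (F - prodRoots z).eval (z j) = 0
    rw [eval_sub]
    have h1 : F.eval (z j) = 0 := hzroot j
    have h2 : (prodRoots z).eval (z j) = 0 := by
      rw [prodRoots_eval]
      exact Finset.prod_eq_zero (mem_univ j) (by ring)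
    rw [h1, h2, sub_zero]
  have hcard : m + 1 ≤ (F - prodRoots z).natDegree := by
    calc m + 1 = (Finset.univ.image z).card := by
          rw [Finset.card_image_of_injective _ hzmono.injective, card_univ, Fintype.card_fin]
    _ ≤ (F - prodRoots z).roots.toFinset.card := Finset.card_le_card hsub
    _ ≤ Multiset.card (F - prodRoots z).roots := Multiset.toFinset_card_le _
    _ ≤ (F - prodRoots z).natDegree := card_roots' _
  omega

lemma StrictInterlace.symm {p q : Polynomial ℝ} (h : StrictInterlace p q) :
    StrictInterlace q p :=
  ⟨fun x hq hp => h.1 x hp hq, h.2.2, h.2.1⟩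

/-- same-size interlacing: `v j < u j` and `u i < v j` for `i < j`. -/
lemma interA {m : ℕ} (u v : Fin (m + 1) → ℝ)
    (hvu : ∀ j, v j < u j) (huv : ∀ i j : Fin (m + 1), (i : ℕ) < (j : ℕ) → u i < v j) :
    StrictInterlace (prodRoots u) (prodRoots v) ∧
    (∀ t : ℝ, ((prodRoots u).IsRoot t ∨ (prodRoots v).IsRoot t) → t ≤ u (Fin.last m)) ∧
    (prodRoots u).IsRoot (u (Fin.last m)) := by
  have humono : ∀ i j : Fin (m + 1), (i : ℕ) ≤ (j : ℕ) → u i ≤ u j := by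
    intro i j hij
    rcases eq_or_lt_of_le hij with he | hlt
    · rw [Fin.ext (he : (i : ℕ) = (j : ℕ))]
    · exact le_of_lt ((huv i j hlt).trans (hvu j))
  have hvmono : ∀ i j : Fin (m + 1), (i : ℕ) ≤ (j : ℕ) → v i ≤ v j := by
    intro i j hij
    rcases eq_or_lt_of_le hij with he | hlt
    · rw [Fin.ext (he : (i : ℕ) = (j : ℕ))]
    · exact le_of_lt ((hvu i).trans (huv i j hlt))
  refine ⟨⟨?_, ?_, ?_⟩, ?_, ?_⟩
  · intro x hx hy
    obtain ⟨i, rfl⟩ := (prodRoots_isRoot_iff u x).mp hx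
    obtain ⟨j, hj⟩ := (prodRoots_isRoot_iff v (u i)).mp hy
    rcases lt_trichotomy (i : ℕ) (j : ℕ) with hij | hij | hij
    · exact absurd hj (ne_of_lt (huv i j hij))
    · rw [Fin.ext hij] at hj; exact absurd hj.symm (ne_of_lt (hvu j))
    · have : v j ≤ v i := hvmono j i (le_of_lt hij)
      have : v j < u i := lt_of_le_of_lt this (hvu i)
      exact absurd hj (ne_of_gt this)
  · intro x y hx hy hxy
    obtain ⟨i, rfl⟩ := (prodRoots_isRoot_iff u x).mp hx
    obtain ⟨j, rfl⟩ := (prodRoots_isRoot_iff u y).mp hy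
    have hij : (i : ℕ) < (j : ℕ) := by
      by_contra hc
      exact absurd hxy (not_lt.mpr (humono j i (by omega)))
    exact ⟨v j, (prodRoots_isRoot_iff v _).mpr ⟨j, rfl⟩, huv i j hij, hvu j⟩
  · intro x y hx hy hxy
    obtain ⟨i, rfl⟩ := (prodRoots_isRoot_iff v x).mp hx
    obtain ⟨j, rfl⟩ := (prodRoots_isRoot_iff v y).mp hy
    have hij : (i : ℕ) < (j : ℕ) := by
      by_contra hc
      exact absurd hxy (not_lt.mpr (hvmono j i (by omega)))
    exact ⟨u i, (prodRoots_isRoot_iff u _).mpr ⟨i, rfl⟩, hvu i, huv i j hij⟩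
  · intro t ht
    rcases ht with ht | ht
    · obtain ⟨i, rfl⟩ := (prodRoots_isRoot_iff u t).mp ht
      exact humono i (Fin.last m) (by simpa using Fin.is_le i)
    · obtain ⟨i, rfl⟩ := (prodRoots_isRoot_iff v t).mp ht
      exact le_of_lt (lt_of_lt_of_le (hvu i) (humono i (Fin.last m) (by simpa using Fin.is_le i)))
  · exact (prodRoots_isRoot_iff u _).mpr ⟨Fin.last m, rfl⟩

/-- size m+1 vs m interlacing: `u i.castSucc < v i < u i.succ`. -/
lemma interB {m : ℕ} (u : Fin (m + 1) → ℝ) (v : Fin m → ℝ)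
    (h1 : ∀ i : Fin m, u i.castSucc < v i) (h2 : ∀ i : Fin m, v i < u i.succ) :
    StrictInterlace (prodRoots u) (prodRoots v) ∧
    (∀ t : ℝ, ((prodRoots u).IsRoot t ∨ (prodRoots v).IsRoot t) → t ≤ u (Fin.last m)) ∧
    (prodRoots u).IsRoot (u (Fin.last m)) := by
  have humono : StrictMono u := Fin.strictMono_iff_lt_succ.mpr fun i => (h1 i).trans (h2 i)
  have hvu : ∀ (i : Fin m) (j : Fin (m + 1)), (j : ℕ) ≤ (i : ℕ) → u j < v i := by
    intro i j hji
    exact lt_of_le_of_lt (humono.monotone (show j ≤ i.castSucc by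
      rw [Fin.le_def]; simpa using hji)) (h1 i)
  have huv : ∀ (i : Fin m) (j : Fin (m + 1)), (i : ℕ) < (j : ℕ) → v i < u j := by
    intro i j hij
    exact lt_of_lt_of_le (h2 i) (humono.monotone (show i.succ ≤ j by
      rw [Fin.le_def]; simpa using hij))
  have hvmono : ∀ i j : Fin m, (i : ℕ) ≤ (j : ℕ) → v i ≤ v j := by
    intro i j hij
    rcases eq_or_lt_of_le hij with he | hlt
    · rw [Fin.ext (he : (i : ℕ) = (j : ℕ))]
    · refine le_of_lt (lt_trans (h2 i) ?_)
      exact hvu j i.succ (by simpa using hlt)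
  refine ⟨⟨?_, ?_, ?_⟩, ?_, ?_⟩
  · intro x hx hy
    obtain ⟨j, rfl⟩ := (prodRoots_isRoot_iff u x).mp hx
    obtain ⟨i, hi⟩ := (prodRoots_isRoot_iff v (u j)).mp hy
    rcases le_or_gt (j : ℕ) (i : ℕ) with hji | hij
    · exact absurd hi (ne_of_lt (hvu i j hji))
    · exact absurd hi (ne_of_gt (huv i j hij))
  · intro x y hx hy hxy
    obtain ⟨j₁, rfl⟩ := (prodRoots_isRoot_iff u x).mp hx
    obtain ⟨j₂, rfl⟩ := (prodRoots_isRoot_iff u y).mp hy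
    have hj : (j₁ : ℕ) < (j₂ : ℕ) := by
      by_contra hc
      exact absurd hxy (not_lt.mpr (humono.monotone (by rw [Fin.le_def]; omega)))
    have hj₂ : (j₂ : ℕ) - 1 < m := by omega
    set k : Fin m := ⟨(j₂ : ℕ) - 1, hj₂⟩ with hk
    refine ⟨v k, (prodRoots_isRoot_iff v _).mpr ⟨k, rfl⟩, ?_, ?_⟩
    · exact hvu k j₁ (by simp [hk]; omega)
    · exact huv k j₂ (by show (j₂ : ℕ) - 1 < j₂; omega)
  · intro x y hx hy hxy
    obtain ⟨i₁, rfl⟩ := (prodRoots_isRoot_iff v x).mp hx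
    obtain ⟨i₂, rfl⟩ := (prodRoots_isRoot_iff v y).mp hy
    have hi : (i₁ : ℕ) < (i₂ : ℕ) := by
      by_contra hc
      exact absurd hxy (not_lt.mpr (hvmono i₂ i₁ (by omega)))
    refine ⟨u i₁.succ, (prodRoots_isRoot_iff u _).mpr ⟨i₁.succ, rfl⟩, h2 i₁, ?_⟩
    exact hvu i₂ i₁.succ (by simpa using hi)
  · intro t ht
    rcases ht with ht | ht
    · obtain ⟨j, rfl⟩ := (prodRoots_isRoot_iff u t).mp ht
      exact humono.monotone (Fin.le_last j)
    · obtain ⟨i, rfl⟩ := (prodRoots_isRoot_iff v t).mp ht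
      exact le_of_lt (lt_of_lt_of_le (h2 i) (humono.monotone (Fin.le_last i.succ)))
  · exact (prodRoots_isRoot_iff u _).mpr ⟨Fin.last m, rfl⟩

lemma XR_snoc {m : ℕ} (r : Fin m → ℝ) :
    Polynomial.X * prodRoots r = prodRoots (Fin.snoc r 0) := by
  unfold prodRoots
  rw [Fin.prod_univ_castSucc]
  have h1 : ∀ i : Fin m, (X - C ((Fin.snoc r 0 : Fin (m + 1) → ℝ) i.castSucc)) = (X - C (r i)) := by
    intro i; simp
  rw [Finset.prod_congr rfl (fun i _ => h1 i)]
  simp [mul_comm]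

def PQRInv (n m : ℕ) (p q r : Fin m → ℝ) : Prop :=
  (PQR n m).1 = prodRoots p ∧ (PQR n m).2.1 = prodRoots q ∧ (PQR n m).2.2 = prodRoots r ∧
  (∀ i, r i < q i) ∧ (∀ i, q i < p i) ∧
  (∀ i j : Fin m, (i : ℕ) < (j : ℕ) → p i < r j) ∧ (∀ i, p i < 0)

lemma coeff_pos {n m : ℕ} (h : 3 * (m + 1) < n) :
    0 < cP n (m + 1) ∧ 0 < cQ n (m + 1) ∧ 0 < cR n (m + 1) := by
  have hn : (3 : ℝ) * ((m : ℝ) + 1) < (n : ℝ) := by exact_mod_cast h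
  have hm : (0 : ℝ) ≤ (m : ℝ) := Nat.cast_nonneg m
  unfold cP cQ cR
  push_cast
  refine ⟨?_, ?_, ?_⟩ <;>
    apply mul_pos (mul_pos (mul_pos (by nlinarith) (by nlinarith)) (by nlinarith)) (by nlinarith)

lemma step {n m : ℕ} (hmn : 3 * (m + 1) < n) {p q r : Fin m → ℝ} (hI : PQRInv n m p q r) :
    ∃ x y w : Fin (m + 1) → ℝ, PQRInv n (m + 1) x y w ∧
      (∀ i : Fin m, x i.castSucc < r i) ∧ (∀ i : Fin m, p i < x i.succ) ∧
      (∀ i : Fin m, q i < y i.succ) ∧ (∀ i : Fin m, r i < w i.succ) ∧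
      (∀ j, y j < x j) ∧ (∀ j, w j < y j) ∧
      (∀ i j : Fin (m + 1), (i : ℕ) < (j : ℕ) → x i < w j) := by
  obtain ⟨hPf, hQf, hRf, hrq, hqp, hpr, hp0⟩ := hI
  obtain ⟨hcP, hcQ, hcR⟩ := coeff_pos hmn
  set g : Fin (m + 1) → ℝ := Fin.snoc r 0 with hg
  have hgcast : ∀ i : Fin m, g i.castSucc = r i := by
    intro i; rw [hg]; simp
  have hglast : g (Fin.last m) = 0 := by rw [hg]; exact Fin.snoc_last _ _
  -- every value of g is ≤ 0 on castSucc strictly negative etc.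
  have hrq' : ∀ i, r i < 0 := fun i => (hrq i).trans ((hqp i).trans (hp0 i))
  have hXR : Polynomial.X * prodRoots r = prodRoots g := by
    unfold prodRoots
    rw [Fin.prod_univ_castSucc]
    have h1 : ∀ i : Fin m, (X - C (g i.castSucc)) = (X - C (r i)) := by
      intro i; rw [hgcast]
    rw [Finset.prod_congr rfl (fun i _ => h1 i), hglast]
    simp [mul_comm]
  -- step P
  have hghP : ∀ i : Fin m, g i.castSucc < p i := by
    intro i; rw [hgcast]; exact (hrq i).trans (hqp i)
  have hhgP : ∀ i : Fin m, p i < g i.succ := by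
    intro i
    rcases eq_or_lt_of_le (Nat.succ_le_of_lt i.isLt) with he | hlt
    · have : i.succ = Fin.last m := Fin.ext (by simpa using he)
      rw [this, hglast]; exact hp0 i
    · have hksub : (i : ℕ) + 1 < m := hlt
      have : i.succ = Fin.castSucc ⟨(i : ℕ) + 1, hksub⟩ := Fin.ext (by simp)
      rw [this, hgcast]
      exact hpr i ⟨(i : ℕ) + 1, hksub⟩ (by simp)
  obtain ⟨x, hxeq, hxmono, hxg, hpx⟩ := key g p hcP hghP hhgP
  have hxcast : ∀ i : Fin m, x i.castSucc < r i := by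
    intro i; have := hxg i.castSucc; rwa [hgcast] at this
  have hxlast : x (Fin.last m) < 0 := by
    have := hxg (Fin.last m); rwa [hglast] at this
  have hx0 : ∀ j, x j < 0 := by
    intro j
    exact lt_of_le_of_lt (hxmono.monotone (Fin.le_last j)) hxlast
  have hPfac : (PQR n (m + 1)).1 = prodRoots x := by
    show (Polynomial.X * (PQR n m).2.2 + Polynomial.C (cP n (m + 1)) * (PQR n m).1) = prodRoots x
    rw [hRf, hPf, hXR, hxeq]
  -- step Q
  have hghQ : ∀ i : Fin m, x i.castSucc < q i := fun i => (hxcast i).trans (hrq i)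
  have hhgQ : ∀ i : Fin m, q i < x i.succ := fun i => (hqp i).trans (hpx i)
  obtain ⟨y, hyeq, hymono, hyx, hqy⟩ := key x q hcQ hghQ hhgQ
  have hQfac : (PQR n (m + 1)).2.1 = prodRoots y := by
    show ((PQR n (m + 1)).1 + Polynomial.C (cQ n (m + 1)) * (PQR n m).2.1) = prodRoots y
    rw [hPfac, hQf, hyeq]
  -- step R
  have hghR : ∀ i : Fin m, y i.castSucc < r i := fun i => (hyx i.castSucc).trans (hxcast i)
  have hhgR : ∀ i : Fin m, r i < y i.succ := fun i => (hrq i).trans (hqy i)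
  obtain ⟨w, hweq, hwmono, hwy, hrw⟩ := key y r hcR hghR hhgR
  have hRfac : (PQR n (m + 1)).2.2 = prodRoots w := by
    show ((PQR n (m + 1)).2.1 + Polynomial.C (cR n (m + 1)) * (PQR n m).2.2) = prodRoots w
    rw [hQfac, hRf, hweq]
  -- cross x < w
  have hxw : ∀ i j : Fin (m + 1), (i : ℕ) < (j : ℕ) → x i < w j := by
    intro i j hij
    have hj0 : (j : ℕ) ≠ 0 := by omega
    obtain ⟨k, rfl⟩ : ∃ k : Fin m, j = k.succ := by
      refine ⟨⟨(j : ℕ) - 1, by omega⟩, Fin.ext (by simp; omega)⟩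
    have hij' : (i : ℕ) < (k : ℕ) + 1 := by simpa using hij
    calc x i ≤ x k.castSucc := hxmono.monotone
          (by rw [Fin.le_def]; simp only [Fin.coe_castSucc]; omega)
    _ < r k := hxcast k
    _ < w k.succ := hrw k
  refine ⟨x, y, w, ⟨hPfac, hQfac, hRfac, hwy, hyx, hxw, hx0⟩,
    hxcast, hpx, hqy, hrw, hyx, hwy, hxw⟩

lemma exists_inv (n : ℕ) : ∀ m : ℕ, 3 * m < n → ∃ p q r : Fin m → ℝ, PQRInv n m p q r := by
  intro m
  induction m with
  | zero =>
    intro _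
    refine ⟨Fin.elim0, Fin.elim0, Fin.elim0, ?_, ?_, ?_, ?_, ?_, ?_, ?_⟩
    · show (PQR n 0).1 = prodRoots _
      unfold prodRoots; simp [PQR]
    · show (PQR n 0).2.1 = prodRoots _
      unfold prodRoots; simp [PQR]
    · show (PQR n 0).2.2 = prodRoots _
      unfold prodRoots; simp [PQR]
    all_goals intro i; exact i.elim0
  | succ k ih =>
    intro hk
    obtain ⟨p, q, r, hI⟩ := ih (by omega)
    obtain ⟨x, y, w, hI', _⟩ := step hk hI
    exact ⟨x, y, w, hI'⟩

end InterlacingAux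

/-- For `n ≥ 3`, `l ≥ 1`, `3l < n`, the six strict interlacing relations between
`ξ·R_{l-1}, P_l, P_{l-1}, Q_l, Q_{l-1}, R_l, R_{l-1}` hold, with the largest merged root
belonging to the indicated polynomial (and equal to `0` in case (1)). -/
theorem PQR_interlacing (n : ℕ) (hn : 3 ≤ n) (l : ℕ) (hl : 1 ≤ l) (h3l : 3 * l < n) :
    -- (1) ξ·R_{l-1} ← P_l : the largest root, namely 0, is a root of ξ·R_{l-1}
    (StrictInterlace (Polynomial.X * (PQR n (l - 1)).2.2) (PQR n l).1 ∧
      (Polynomial.X * (PQR n (l - 1)).2.2).IsRoot 0 ∧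
      (∀ y : ℝ, ((Polynomial.X * (PQR n (l - 1)).2.2).IsRoot y ∨ (PQR n l).1.IsRoot y) → y ≤ 0) ∧
      LargestMergedRootOf (Polynomial.X * (PQR n (l - 1)).2.2) (PQR n l).1
        (Polynomial.X * (PQR n (l - 1)).2.2)) ∧
    -- (2) P_l ← P_{l-1} reversed: largest root belongs to P_l
    (StrictInterlace (PQR n l).1 (PQR n (l - 1)).1 ∧
      LargestMergedRootOf (PQR n l).1 (PQR n (l - 1)).1 (PQR n l).1) ∧
    -- (3) Q_l and P_l : largest root belongs to P_l
    (StrictInterlace (PQR n l).2.1 (PQR n l).1 ∧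
      LargestMergedRootOf (PQR n l).2.1 (PQR n l).1 (PQR n l).1) ∧
    -- (4) Q_l and Q_{l-1} : largest root belongs to Q_l
    (StrictInterlace (PQR n l).2.1 (PQR n (l - 1)).2.1 ∧
      LargestMergedRootOf (PQR n l).2.1 (PQR n (l - 1)).2.1 (PQR n l).2.1) ∧
    -- (5) R_l and Q_l : largest root belongs to Q_l
    (StrictInterlace (PQR n l).2.2 (PQR n l).2.1 ∧
      LargestMergedRootOf (PQR n l).2.2 (PQR n l).2.1 (PQR n l).2.1) ∧
    -- (6) R_l and R_{l-1} : largest root belongs to R_l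
    (StrictInterlace (PQR n l).2.2 (PQR n (l - 1)).2.2 ∧
      LargestMergedRootOf (PQR n l).2.2 (PQR n (l - 1)).2.2 (PQR n l).2.2) := by
  obtain ⟨m, rfl⟩ : ∃ m, l = m + 1 := ⟨l - 1, by omega⟩
  simp only [Nat.add_sub_cancel]
  obtain ⟨p, q, r, hI⟩ := exists_inv n m (by omega)
  obtain ⟨x, y, w, hI', S1, S2, S3, S4, hyx, hwy, hxw⟩ := step h3l hI
  obtain ⟨hPf, hQf, hRf, hrq, hqp, hpr, hp0⟩ := hI
  obtain ⟨hPf', hQf', hRf', hwy', hyx', hxw', hx0⟩ := hI'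
  -- helper order facts on old level
  have hrp : ∀ i j : Fin m, (i : ℕ) ≤ (j : ℕ) → r i < p j := by
    intro i j hij
    rcases eq_or_lt_of_le hij with he | hlt
    · rw [Fin.ext he]; exact (hrq j).trans (hqp j)
    · exact ((hrq i).trans (hqp i)).trans ((hpr i j hlt).trans ((hrq j).trans (hqp j)))
  have hsnoclast : (Fin.snoc r 0 : Fin (m + 1) → ℝ) (Fin.last m) = 0 := by simp
  have hsnoccast : ∀ i : Fin m, (Fin.snoc r 0 : Fin (m + 1) → ℝ) i.castSucc = r i := by
    intro i; simp
  -- block (1)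
  have hA1 := interA (Fin.snoc r 0) x
    (by
      intro j
      refine Fin.lastCases ?_ ?_ j
      · rw [hsnoclast]
        exact lt_of_le_of_lt (le_of_eq rfl) (hx0 (Fin.last m))
      · intro i
        rw [hsnoccast]
        exact S1 i)
    (by
      intro i j hij
      have him : (i : ℕ) < m := by omega
      obtain ⟨i', rfl⟩ : ∃ i' : Fin m, i'.castSucc = i := ⟨⟨(i : ℕ), him⟩, Fin.ext (by simp)⟩
      obtain ⟨k, rfl⟩ : ∃ k : Fin m, j = k.succ := by
        refine ⟨⟨(j : ℕ) - 1, by omega⟩, Fin.ext (by simp; omega)⟩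
      rw [hsnoccast]
      have : (i' : ℕ) ≤ (k : ℕ) := by simp at hij; omega
      exact (hrp i' k this).trans (S2 k))
  obtain ⟨hSI1, hBnd1, hRoot1⟩ := hA1
  -- block (2)
  have hB2 := interB x p (fun i => (S1 i).trans ((hrq i).trans (hqp i))) S2
  -- block (3)
  have hA3 := interA x y hyx (fun i j hij => (hxw i j hij).trans (hwy j))
  -- block (4)
  have hB4 := interB y q (fun i => (hyx i.castSucc).trans ((S1 i).trans (hrq i))) S3
  -- block (5)
  have hA5 := interA y w hwy (fun i j hij => (hyx i).trans (hxw i j hij))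
  -- block (6)
  have hB6 := interB w r (fun i => (hwy i.castSucc).trans ((hyx i.castSucc).trans (S1 i))) S4
  rw [hPf', hQf', hRf', hPf, hQf, hRf, XR_snoc r]
  refine ⟨⟨hSI1, ?_, ?_, ?_⟩, ⟨hB2.1, ?_⟩, ⟨hA3.1.symm, ?_⟩, ⟨hB4.1, ?_⟩, ⟨hA5.1.symm, ?_⟩,
    ⟨hB6.1, ?_⟩⟩
  · have := hRoot1; rwa [hsnoclast] at this
  · intro t ht
    have := hBnd1 t ht
    rwa [hsnoclast] at this
  · refine ⟨0, ?_, ?_⟩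
    · have := hRoot1; rwa [hsnoclast] at this
    · intro t ht
      have := hBnd1 t ht
      rwa [hsnoclast] at this
  · exact ⟨x (Fin.last m), hB2.2.2, hB2.2.1⟩
  · exact ⟨x (Fin.last m), hA3.2.2, fun t ht => hA3.2.1 t ht.symm⟩
  · exact ⟨y (Fin.last m), hB4.2.2, hB4.2.1⟩
  · exact ⟨y (Fin.last m), hA5.2.2, fun t ht => hA5.2.1 t ht.symm⟩
  · exact ⟨w (Fin.last m), hB6.2.2, hB6.2.1⟩
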